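/- The weak Brouwer–Kripke schema is inconsistent with ∀α∃β-continuity: if for every real number α (coded as a choice sequence) there is a binary sequence β with (∀n, β n = 0) ↔ (α irrational) and (∃n, β n = 1) → (α rational), and moreover β = Φ α for a continuous functional Φ (continuity meaning each value β n depends on only finitely many values of α), then a contradiction follows, since any finite initial segment of a rational α can be extended to an irrational number. -/

import Mathlib

/-- α is a Cauchy sequence of rationals (a coded real number). -/
def IsCauchySeq (α : ℕ → ℚ) : Prop :=
  ∀ ε : ℚ, 0 < ε → ∃ N, ∀ m ≥ N, ∀ n ≥ N, |α m - α n| < ε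

/-- α is rational: it converges to a rational number. -/
def IsRationalSeq (α : ℕ → ℚ) : Prop :=
  ∃ q : ℚ, ∀ ε : ℚ, 0 < ε → ∃ N, ∀ n ≥ N, |α n - q| < ε

/-- rational approximation of √2 -/
noncomputable def sq2 (i : ℕ) : ℚ := (Nat.sqrt (2 * 4 ^ i) : ℚ) / 2 ^ i

lemma sq2_close (i : ℕ) : 0 ≤ Real.sqrt 2 - (sq2 i : ℝ) ∧
    Real.sqrt 2 - (sq2 i : ℝ) < 1 / 2 ^ i := by
  have h2 : (0:ℝ) < 2 ^ i := by positivity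
  have hs := Nat.sqrt_le' (2 * 4 ^ i)
  have hs' := Nat.lt_succ_sqrt' (2 * 4 ^ i)
  set s := Nat.sqrt (2 * 4 ^ i) with hsdef
  have hpow : ((2:ℝ) ^ i) ^ 2 = 4 ^ i := by
    rw [← pow_mul, mul_comm, pow_mul]; norm_num
  have hle : ((s : ℝ) / 2 ^ i) ≤ Real.sqrt 2 := by
    rw [Real.le_sqrt (by positivity) (by norm_num)]
    have h : ((s:ℝ)) ^ 2 ≤ 2 * 4 ^ i := by exact_mod_cast hs
    rw [div_pow, div_le_iff₀ (by positivity), hpow]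
    linarith
  have hlt : Real.sqrt 2 < ((s : ℝ) + 1) / 2 ^ i := by
    rw [Real.sqrt_lt' (by positivity)]
    have h : (2 * 4 ^ i : ℝ) < ((s:ℝ)+1) ^ 2 := by
      have := hs'
      rw [Nat.succ_eq_add_one] at this
      exact_mod_cast this
    rw [div_pow, lt_div_iff₀ (by positivity), hpow]
    linarith
  have hcast : ((sq2 i : ℚ) : ℝ) = (s : ℝ) / 2 ^ i := by
    simp [sq2, hsdef]
  constructor
  · rw [hcast]; linarith
  · rw [hcast]
    have : ((s:ℝ)+1)/2^i = (s:ℝ)/2^i + 1/2^i := by ring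
    linarith [this ▸ hlt]

lemma sq2_close' (i : ℕ) : |(sq2 i : ℝ) - Real.sqrt 2| ≤ 1 / 2 ^ i := by
  obtain ⟨h1, h2⟩ := sq2_close i
  rw [abs_sub_comm, abs_of_nonneg h1]
  linarith

theorem bks_minus_inconsistent_with_continuity
    (Φ : (ℕ → ℚ) → (ℕ → ℕ))
    (hbin : ∀ α, IsCauchySeq α → ∀ n, Φ α n = 0 ∨ Φ α n = 1)
    (hbks1 : ∀ α, IsCauchySeq α → ((∀ n, Φ α n = 0) ↔ ¬ IsRationalSeq α))
    (hbks2 : ∀ α, IsCauchySeq α → ((∃ n, Φ α n = 1) → IsRationalSeq α))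
    (hcont : ∀ α, IsCauchySeq α →
      ∃ m, ∀ γ, IsCauchySeq γ → (∀ i < m, α i = γ i) → Φ α = Φ γ) :
    False := by
  classical
  set α : ℕ → ℚ := fun _ => 0 with hα
  have hαC : IsCauchySeq α := by
    intro ε hε; exact ⟨0, fun m _ n _ => by simpa [hα] using hε⟩
  have hαR : IsRationalSeq α := ⟨0, fun ε hε => ⟨0, fun n _ => by simpa [hα] using hε⟩⟩
  obtain ⟨m, hm⟩ := hcont α hαC
  -- γ : zeros up to m, then √2 approximants
  set γ : ℕ → ℚ := fun i => if i < m then 0 else sq2 i with hγ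
  -- γ is Cauchy
  have hclose : ∀ n ≥ m, |(γ n : ℝ) - Real.sqrt 2| ≤ 1 / 2 ^ n := by
    intro n hn
    have : γ n = sq2 n := by simp [hγ, Nat.not_lt.mpr hn]
    rw [this]; exact sq2_close' n
  have hγC : IsCauchySeq γ := by
    intro ε hε
    obtain ⟨N0, hN0⟩ := pow_unbounded_of_one_lt (R := ℚ) (4 / ε) (by norm_num : (1:ℚ) < 2)
    refine ⟨max N0 m, fun a ha b hb => ?_⟩
    have ha' : a ≥ m := le_trans (le_max_right _ _) ha
    have hb' : b ≥ m := le_trans (le_max_right _ _) hb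
    have h1 := hclose a ha'
    have h2 := hclose b hb'
    have key : |(γ a : ℝ) - γ b| ≤ 1 / 2 ^ a + 1 / 2 ^ b := by
      calc |(γ a : ℝ) - γ b| ≤ |(γ a : ℝ) - Real.sqrt 2| + |(γ b : ℝ) - Real.sqrt 2| := by
            rw [abs_sub_comm ((γ b : ℝ))]
            exact abs_sub_le _ _ _
        _ ≤ 1 / 2 ^ a + 1 / 2 ^ b := add_le_add h1 h2
    have hpe : ∀ c ≥ max N0 m, (1 : ℝ) / 2 ^ c < ε / 2 := by
      intro c hc
      have hc0 : N0 ≤ c := le_trans (le_max_left _ _) hc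
      have h4 : (4 / ε : ℚ) < 2 ^ N0 := hN0
      have h4' : (4 / ε : ℝ) < 2 ^ N0 := by exact_mod_cast h4
      have hmono : (2:ℝ) ^ N0 ≤ 2 ^ c := pow_le_pow_right₀ (by norm_num) hc0
      have hεR : (0:ℝ) < ε := by exact_mod_cast hε
      rw [div_lt_div_iff₀ (by positivity) (by norm_num)]
      have : (4 / ε : ℝ) < 2 ^ c := lt_of_lt_of_le h4' hmono
      rw [div_lt_iff₀ hεR] at this
      nlinarith [pow_pos (by norm_num : (0:ℝ) < 2) c]
    have : |(γ a : ℝ) - γ b| < ε := by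
      have := add_lt_add (hpe a ha) (hpe b hb)
      calc |(γ a : ℝ) - γ b| ≤ 1 / 2 ^ a + 1 / 2 ^ b := key
        _ < ε / 2 + ε / 2 := add_lt_add (hpe a ha) (hpe b hb)
        _ = ε := by ring
    exact_mod_cast this
  -- γ is not rational: it converges to √2
  have hγnR : ¬ IsRationalSeq γ := by
    rintro ⟨q, hq⟩
    have hsq : Real.sqrt 2 = (q : ℝ) := by
      by_contra hne
      have hd : (0:ℝ) < |Real.sqrt 2 - q| := abs_pos.mpr (sub_ne_zero.mpr hne)
      obtain ⟨εq, hεq0, hεq⟩ : ∃ εq : ℚ, 0 < εq ∧ (εq : ℝ) < |Real.sqrt 2 - q| / 2 := by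
        obtain ⟨εq, h1, h2⟩ := exists_rat_btwn (by linarith : (0:ℝ) < |Real.sqrt 2 - q| / 2)
        exact ⟨εq, by exact_mod_cast h1, h2⟩
      obtain ⟨N, hN⟩ := hq εq hεq0
      -- pick n ≥ max N m with 1/2^n < |√2 - q|/2
      obtain ⟨N1, hN1⟩ := pow_unbounded_of_one_lt (R := ℝ) (2 / |Real.sqrt 2 - q|) (by norm_num : (1:ℝ) < 2)
      set n := max (max N m) N1 with hn
      have hnN : n ≥ N := le_trans (le_max_left _ _) (le_max_left _ _)
      have hnm : n ≥ m := le_trans (le_max_right _ _) (le_max_left _ _)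
      have hnN1 : n ≥ N1 := le_max_right _ _
      have h1 := hclose n hnm
      have h2 := hN n hnN
      have h2' : |(γ n : ℝ) - q| < εq := by exact_mod_cast h2
      have hp : (1:ℝ) / 2 ^ n < |Real.sqrt 2 - q| / 2 := by
        have hmono : (2:ℝ) ^ N1 ≤ 2 ^ n := pow_le_pow_right₀ (by norm_num) hnN1
        have : 2 / |Real.sqrt 2 - q| < 2 ^ n := lt_of_lt_of_le hN1 hmono
        rw [div_lt_iff₀ hd] at this
        rw [div_lt_div_iff₀ (by positivity) (by norm_num)]
        nlinarith
      have : |Real.sqrt 2 - q| ≤ |(γ n : ℝ) - Real.sqrt 2| + |(γ n : ℝ) - q| := by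
        rw [abs_sub_comm ((γ n:ℝ))]
        exact abs_sub_le _ _ _
      linarith
    exact irrational_sqrt_two ⟨q, hsq.symm⟩
  -- α is rational so some Φ α n = 1
  have hne : ¬ ∀ n, Φ α n = 0 := fun h => (hbks1 α hαC).mp h hαR
  obtain ⟨n, hn⟩ : ∃ n, Φ α n = 1 := by
    by_contra h
    push_neg at h
    exact hne fun n => (hbin α hαC n).resolve_right (h n)
  have heq : Φ α = Φ γ := hm γ hγC (fun i hi => by simp [hα, hγ, hi])
  exact hγnR (hbks2 γ hγC ⟨n, heq ▸ hn⟩)
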